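/- Let j ∈ L¹(ℝ^d) be nonnegative with ∫_{ℝ^d} j(x) dx = 1, and for ε > 0 set j_ε(x) = ε^{−d} j(x/ε). Let ψ : ℝ^d → [0,∞) be Borel measurable and let u ∈ L¹(ℝ^d) satisfy ∫_{ℝ^d} |û(ξ)|² ψ(ξ) dξ < ∞. Then ∫_{ℝ^d} |(j_ε * u)^∧(ξ) − û(ξ)|² ψ(ξ) dξ → 0 as ε → 0⁺. In other words, mollifications of u converge to u in the ψ-weighted form 𝓑(v,v) = ∫ |v̂|² ψ dξ. -/

import Mathlib

open MeasureTheory Filter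
open scoped RealInnerProductSpace ENNReal Topology
open Complex
open scoped NNReal FourierTransform

/-- The Fourier transform `ĝ(ξ) = ∫ e^{-2πi⟪ξ,x⟫} g(x) dx` of a real function on `ℝ^d`. -/
noncomputable def fourierHat {d : ℕ} (g : EuclideanSpace ℝ (Fin d) → ℝ)
    (ξ : EuclideanSpace ℝ (Fin d)) : ℂ :=
  ∫ x, Complex.exp (-(2 * Real.pi * ⟪ξ, x⟫ : ℝ) * Complex.I) * (g x : ℂ)

namespace Stmt5Aux

variable {d : ℕ}

noncomputable def e (ξ x : EuclideanSpace ℝ (Fin d)) : ℂ :=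
  Complex.exp (-(2 * Real.pi * ⟪ξ, x⟫ : ℝ) * Complex.I)

lemma fourierHat_def (g : EuclideanSpace ℝ (Fin d) → ℝ) (ξ : EuclideanSpace ℝ (Fin d)) :
    fourierHat g ξ = ∫ x, e ξ x * (g x : ℂ) := rfl

lemma norm_e (ξ x : EuclideanSpace ℝ (Fin d)) : ‖e ξ x‖ = 1 := by
  simp [e, Complex.norm_exp]

lemma e_add (ξ a b : EuclideanSpace ℝ (Fin d)) : e ξ (a + b) = e ξ a * e ξ b := by
  rw [e, e, e, ← Complex.exp_add]
  congr 1
  rw [inner_add_right]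
  push_cast
  ring

lemma e_smul (ξ x : EuclideanSpace ℝ (Fin d)) (c : ℝ) : e ξ (c • x) = e (c • ξ) x := by
  rw [e, e, real_inner_smul_right, ← real_inner_smul_left]

lemma continuous_e (ξ : EuclideanSpace ℝ (Fin d)) : Continuous (e ξ) := by
  have h1 : Continuous fun x : EuclideanSpace ℝ (Fin d) => ⟪ξ, x⟫ :=
    continuous_inner.comp (continuous_const.prodMk continuous_id)
  exact Complex.continuous_exp.comp
    (((Complex.continuous_ofReal.comp (continuous_const.mul h1)).neg).mul continuous_const)

lemma fourierHat_eq_fourierIntegral (g : EuclideanSpace ℝ (Fin d) → ℝ)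
    (ξ : EuclideanSpace ℝ (Fin d)) :
    fourierHat g ξ = 𝓕 (fun x => (g x : ℂ)) ξ := by
  rw [Real.fourier_eq']
  refine integral_congr_ae (Filter.Eventually.of_forall fun x => ?_)
  simp only [smul_eq_mul]
  congr 2
  push_cast
  rw [real_inner_comm]
  ring

lemma continuous_fourierHat (g : EuclideanSpace ℝ (Fin d) → ℝ) (hg : Integrable g) :
    Continuous (fourierHat g) := by
  have : Continuous (𝓕 (fun x => (g x : ℂ))) := by
    exact VectorFourier.fourierIntegral_continuous Real.continuous_fourierChar
      (by exact continuous_inner) hg.ofReal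
  exact this.congr fun ξ => (fourierHat_eq_fourierIntegral g ξ).symm

lemma norm_fourierHat_le (g : EuclideanSpace ℝ (Fin d) → ℝ) (hg0 : ∀ x, 0 ≤ g x)
    (ξ : EuclideanSpace ℝ (Fin d)) : ‖fourierHat g ξ‖ ≤ ∫ x, g x := by
  rw [fourierHat_def]
  refine (norm_integral_le_integral_norm _).trans_eq ?_
  refine integral_congr_ae (Filter.Eventually.of_forall fun x => ?_)
  show ‖e ξ x * (g x : ℂ)‖ = g x
  rw [norm_mul, norm_e, one_mul, Complex.norm_real, Real.norm_of_nonneg (hg0 x)]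

lemma fourierHat_zero (g : EuclideanSpace ℝ (Fin d) → ℝ) :
    fourierHat g 0 = (∫ x, g x : ℝ) := by
  rw [fourierHat_def]
  have h : ∀ x : EuclideanSpace ℝ (Fin d), e (0 : EuclideanSpace ℝ (Fin d)) x * (g x : ℂ) = (g x : ℂ) := by
    intro x; simp [e]
  rw [integral_congr_ae (Filter.Eventually.of_forall h)]
  exact integral_ofReal


lemma fourierHat_conv (f g : EuclideanSpace ℝ (Fin d) → ℝ)
    (hf : Integrable f) (hg : Integrable g) (ξ : EuclideanSpace ℝ (Fin d)) :
    fourierHat (fun x => ∫ y, f (x - y) * g y) ξ = fourierHat f ξ * fourierHat g ξ := by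
  have hFi : Integrable (fun x => (f x : ℂ)) := hf.ofReal
  have hGi : Integrable (fun x => (g x : ℂ)) := hg.ofReal
  set H : EuclideanSpace ℝ (Fin d) → EuclideanSpace ℝ (Fin d) → ℂ :=
    fun x y => e ξ x * ((f (x - y) : ℂ) * (g y : ℂ)) with hH
  have hprod0 : Integrable
      (fun p : EuclideanSpace ℝ (Fin d) × EuclideanSpace ℝ (Fin d) =>
        ((g p.2 : ℂ)) * ((f (p.1 - p.2) : ℂ))) (volume.prod volume) := by
    have := hGi.convolution_integrand (ContinuousLinearMap.mul ℂ ℂ) hFi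
    simpa [ContinuousLinearMap.mul_apply'] using this
  have hprod : Integrable (Function.uncurry H) (volume.prod volume) := by
    refine Integrable.bdd_mul ?_ ?_ (Filter.Eventually.of_forall fun p => (norm_e ξ p.1).le)
    · exact hprod0.congr (Filter.Eventually.of_forall fun p => by
        simp [mul_comm])
    · exact ((continuous_e ξ).comp continuous_fst).aestronglyMeasurable
  have step1 : fourierHat (fun x => ∫ y, f (x - y) * g y) ξ = ∫ x, ∫ y, H x y := by
    rw [fourierHat_def]
    refine integral_congr_ae (Filter.Eventually.of_forall fun x => ?_)
    have h1 : ((∫ y, f (x - y) * g y : ℝ) : ℂ) = ∫ y, ((f (x - y) * g y : ℝ) : ℂ) :=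
      integral_ofReal.symm
    show e ξ x * _ = _
    rw [h1, ← integral_const_mul]
    exact integral_congr_ae (Filter.Eventually.of_forall fun y => by
      rw [hH]; push_cast; ring)
  rw [step1, integral_integral_swap hprod]
  have step2 : ∀ y : EuclideanSpace ℝ (Fin d),
      (∫ x, H x y) = fourierHat f ξ * (e ξ y * (g y : ℂ)) := by
    intro y
    have first : ∀ x : EuclideanSpace ℝ (Fin d),
        H x y = (fun z => e ξ z * (f z : ℂ)) (x + -y) * (e ξ y * (g y : ℂ)) := by
      intro x
      show e ξ x * ((f (x - y) : ℂ) * (g y : ℂ))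
          = e ξ (x + -y) * (f (x + -y) : ℂ) * (e ξ y * (g y : ℂ))
      rw [← sub_eq_add_neg, show e ξ x = e ξ ((x - y) + y) by rw [sub_add_cancel], e_add]
      ring
    calc (∫ x, H x y)
        = ∫ x, (fun z => e ξ z * (f z : ℂ)) (x + -y) * (e ξ y * (g y : ℂ)) :=
          integral_congr_ae (Filter.Eventually.of_forall fun x => first x)
      _ = (∫ x, (fun z => e ξ z * (f z : ℂ)) (x + -y)) * (e ξ y * (g y : ℂ)) :=
          integral_mul_const _ _
      _ = (∫ z, e ξ z * (f z : ℂ)) * (e ξ y * (g y : ℂ)) := by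
          rw [integral_add_right_eq_self (μ := volume) (fun z => e ξ z * (f z : ℂ)) (-y)]
      _ = fourierHat f ξ * (e ξ y * (g y : ℂ)) := by rw [fourierHat_def]
  calc (∫ y, ∫ x, H x y)
      = ∫ y, fourierHat f ξ * (e ξ y * (g y : ℂ)) :=
        integral_congr_ae (Filter.Eventually.of_forall fun y => step2 y)
    _ = fourierHat f ξ * ∫ y, e ξ y * (g y : ℂ) := integral_const_mul _ _
    _ = fourierHat f ξ * fourierHat g ξ := rfl

lemma fourierHat_scale (g : EuclideanSpace ℝ (Fin d) → ℝ) {ε : ℝ} (hε : 0 < ε)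
    (ξ : EuclideanSpace ℝ (Fin d)) :
    fourierHat (fun x => (ε ^ d)⁻¹ * g (ε⁻¹ • x)) ξ = fourierHat g (ε • ξ) := by
  rw [fourierHat_def, fourierHat_def]
  have key : ∀ x : EuclideanSpace ℝ (Fin d),
      e ξ x * (((ε ^ d)⁻¹ * g (ε⁻¹ • x) : ℝ) : ℂ)
      = (fun z => ((ε : ℂ) ^ d)⁻¹ * (e (ε • ξ) z * (g z : ℂ))) (ε⁻¹ • x) := by
    intro x
    show e ξ x * (((ε ^ d)⁻¹ * g (ε⁻¹ • x) : ℝ) : ℂ)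
        = ((ε : ℂ) ^ d)⁻¹ * (e (ε • ξ) (ε⁻¹ • x) * (g (ε⁻¹ • x) : ℂ))
    rw [← e_smul, smul_inv_smul₀ hε.ne']
    push_cast
    ring
  rw [integral_congr_ae (Filter.Eventually.of_forall key),
    MeasureTheory.Measure.integral_comp_inv_smul_of_nonneg volume
      (fun z => ((ε : ℂ) ^ d)⁻¹ * (e (ε • ξ) z * (g z : ℂ))) hε.le,
    finrank_euclideanSpace_fin, integral_const_mul]
  rw [Complex.real_smul, ← mul_assoc]
  norm_cast
  rw [mul_inv_cancel₀ (pow_ne_zero d hε.ne')]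
  push_cast
  rw [one_mul]

end Stmt5Aux

open Stmt5Aux in
/-- Let `j ∈ L¹(ℝ^d)` be nonnegative with `∫ j = 1`, `j_ε(x) = ε^{-d} j(x/ε)`,
`ψ : ℝ^d → [0,∞)` Borel measurable, and `u ∈ L¹(ℝ^d)` with `∫ |û|² ψ < ∞`. Then
`∫ |(j_ε * u)^∧(ξ) - û(ξ)|² ψ(ξ) dξ → 0` as `ε → 0⁺`, i.e. mollifications of `u`
converge to `u` in the `ψ`-weighted Dirichlet form. -/
theorem stmt5 {d : ℕ} (j u : EuclideanSpace ℝ (Fin d) → ℝ)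
    (ψ : EuclideanSpace ℝ (Fin d) → ℝ)
    (hj : Integrable j) (hj0 : ∀ x, 0 ≤ j x) (hj1 : ∫ x, j x = 1)
    (hu : Integrable u) (hψm : Measurable ψ) (hψ0 : ∀ ξ, 0 ≤ ψ ξ)
    (hfin : (∫⁻ ξ, (‖fourierHat u ξ‖₊ : ℝ≥0∞) ^ 2 * ENNReal.ofReal (ψ ξ)) ≠ ⊤) :
    Tendsto (fun ε : ℝ =>
        ∫⁻ ξ, (‖fourierHat
              (fun x => ∫ y, ((ε ^ d)⁻¹ * j (ε⁻¹ • (x - y))) * u y) ξ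
            - fourierHat u ξ‖₊ : ℝ≥0∞) ^ 2 * ENNReal.ofReal (ψ ξ))
      (𝓝[>] 0) (𝓝 0) := by
  have hcj : Continuous (fourierHat j) := continuous_fourierHat j hj
  have hcu : Continuous (fourierHat u) := continuous_fourierHat u hu
  set c : EuclideanSpace ℝ (Fin d) → ℝ≥0∞ :=
    fun ξ => (‖fourierHat u ξ‖₊ : ℝ≥0∞) ^ 2 * ENNReal.ofReal (ψ ξ) with hc
  have hcmeas : Measurable c :=
    ((hcu.nnnorm.measurable.coe_nnreal_ennreal).pow_const 2).mul hψm.ennreal_ofReal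
  have hcfin : ∀ ξ, c ξ ≠ ⊤ := fun ξ =>
    ENNReal.mul_ne_top (ENNReal.pow_ne_top ENNReal.coe_ne_top) ENNReal.ofReal_ne_top
  have hfinc : (∫⁻ ξ, c ξ) ≠ ⊤ := hfin
  have hj1' : fourierHat j 0 = 1 := by
    rw [fourierHat_zero, hj1, Complex.ofReal_one]
  have hjbd : ∀ w, ‖fourierHat j w‖ ≤ 1 := fun w => by
    simpa [hj1] using norm_fourierHat_le j hj0 w
  have hG : Tendsto (fun ε : ℝ =>
      ∫⁻ ξ, (‖fourierHat j (ε • ξ) - 1‖₊ : ℝ≥0∞) ^ 2 * c ξ) (𝓝[>] 0) (𝓝 0) := by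
    rw [show (𝓝 (0 : ℝ≥0∞))
        = 𝓝 (∫⁻ _ : EuclideanSpace ℝ (Fin d), (0 : ℝ≥0∞)) by rw [lintegral_zero]]
    refine tendsto_lintegral_filter_of_dominated_convergence (fun ξ => 4 * c ξ) ?_ ?_ ?_ ?_
    · refine Filter.Eventually.of_forall fun ε => ?_
      have h1 : Continuous fun ξ : EuclideanSpace ℝ (Fin d) => fourierHat j (ε • ξ) - 1 :=
        (hcj.comp (continuous_const_smul ε)).sub continuous_const
      exact ((h1.nnnorm.measurable.coe_nnreal_ennreal).pow_const 2).mul hcmeas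
    · refine Filter.Eventually.of_forall fun ε => MeasureTheory.ae_of_all _ fun ξ => ?_
      have hb : (‖fourierHat j (ε • ξ) - 1‖₊ : ℝ≥0∞) ≤ 2 := by
        have hnb : ‖fourierHat j (ε • ξ) - 1‖ ≤ 2 := by
          calc ‖fourierHat j (ε • ξ) - 1‖ ≤ ‖fourierHat j (ε • ξ)‖ + ‖(1 : ℂ)‖ :=
                norm_sub_le _ _
            _ ≤ 1 + 1 := by rw [norm_one]; exact add_le_add (hjbd (ε • ξ)) le_rfl
            _ = 2 := by norm_num
        have hb' : ‖fourierHat j (ε • ξ) - 1‖₊ ≤ (2 : ℝ≥0) := by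
          rw [← NNReal.coe_le_coe]
          simpa [coe_nnnorm] using hnb
        exact_mod_cast hb'
      calc (‖fourierHat j (ε • ξ) - 1‖₊ : ℝ≥0∞) ^ 2 * c ξ
          ≤ 2 ^ 2 * c ξ := mul_le_mul_left (pow_le_pow_left' hb 2) _
        _ = 4 * c ξ := by norm_num
    · rw [lintegral_const_mul 4 hcmeas]
      exact ENNReal.mul_ne_top (by norm_num) hfinc
    · refine MeasureTheory.ae_of_all _ fun ξ => ?_
      have h1 : Tendsto (fun ε : ℝ => ε • ξ) (𝓝[>] 0)
          (𝓝 (0 : EuclideanSpace ℝ (Fin d))) := by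
        have h1' : Tendsto (fun ε : ℝ => ε • ξ) (𝓝 0) (𝓝 ((0 : ℝ) • ξ)) :=
          ((continuous_id.smul continuous_const).tendsto 0)
        simpa using h1'.mono_left nhdsWithin_le_nhds
      have h2 : Tendsto (fun ε : ℝ => fourierHat j (ε • ξ) - 1) (𝓝[>] 0) (𝓝 0) := by
        have h2' := ((hcj.tendsto 0).comp h1).sub (tendsto_const_nhds (x := (1 : ℂ)))
        rw [hj1', sub_self] at h2'
        exact h2'
      have h4 : Tendsto (fun ε : ℝ => (‖fourierHat j (ε • ξ) - 1‖₊ : ℝ≥0∞)) (𝓝[>] 0)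
          (𝓝 0) := by
        rw [← ENNReal.coe_zero]
        refine ENNReal.tendsto_coe.2 ?_
        simpa [Function.comp_def] using (continuous_nnnorm.tendsto (0 : ℂ)).comp h2
      have h5 := ENNReal.Tendsto.pow (n := 2) h4
      have h6 := ENNReal.Tendsto.mul_const h5 (Or.inr (hcfin ξ))
      simpa using h6
  refine hG.congr' ?_
  filter_upwards [self_mem_nhdsWithin] with ε hε
  have hε' : (0 : ℝ) < ε := hε
  refine lintegral_congr fun ξ => ?_
  have hjε : Integrable (fun x => (ε ^ d)⁻¹ * j (ε⁻¹ • x)) :=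
    ((integrable_comp_smul_iff volume j (inv_ne_zero hε'.ne')).2 hj).const_mul _
  have hconv : fourierHat (fun x => ∫ y, ((ε ^ d)⁻¹ * j (ε⁻¹ • (x - y))) * u y) ξ
      = fourierHat j (ε • ξ) * fourierHat u ξ := by
    calc fourierHat (fun x => ∫ y, ((ε ^ d)⁻¹ * j (ε⁻¹ • (x - y))) * u y) ξ
        = fourierHat (fun z => (ε ^ d)⁻¹ * j (ε⁻¹ • z)) ξ * fourierHat u ξ := by
          simpa using fourierHat_conv (fun z => (ε ^ d)⁻¹ * j (ε⁻¹ • z)) u hjε hu ξ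
      _ = fourierHat j (ε • ξ) * fourierHat u ξ := by rw [fourierHat_scale j hε' ξ]
  rw [hconv, show fourierHat j (ε • ξ) * fourierHat u ξ - fourierHat u ξ
      = (fourierHat j (ε • ξ) - 1) * fourierHat u ξ by ring, nnnorm_mul, ENNReal.coe_mul]
  rw [hc]
  ring
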